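/- Let λ > 0, C ≥ 0, M < ∞. Let (γ_k)_{k≥0} be a sequence of positive real numbers such that: γ_k ≤ γ_{k−1} and γ_k ≥ γ_{k−1}/(1 + λ) for all k ≥ 1, λγ_k ≤ 1 for all k, γ_k → 0 as k → ∞, ∑_{k=0}^{∞} γ_k = ∞, and A_K := ∑_{k=0}^{K−1} γ_k · ∏_{l=k+1}^{K−1} (1 − λγ_l) ≤ M for all K ≥ 1. Let (ε_k)_{k≥0} be a nonincreasing sequence of nonnegative real numbers with ε_k → 0, and let (W_k)_{k≥0} be a sequence of nonnegative real numbers satisfying W_{k+1} ≤ (1 − λγ_k)·W_k + γ_k²C + 2γ_k ε_k for all k ≥ 0. Then W_K → 0 as K → ∞. -/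

import Mathlib

open Filter

/-- Real-sequence form of the decaying-step-size convergence theorem for inexact PGLA
(Theorem 3.15 of the paper). -/
theorem iPGLA_decaying_step_sizes
    (lam C M : ℝ) (hlam : 0 < lam) (hC : 0 ≤ C)
    (γ : ℕ → ℝ) (hγpos : ∀ k, 0 < γ k)
    (hγmono : ∀ k : ℕ, γ (k + 1) ≤ γ k ∧ γ k / (1 + lam) ≤ γ (k + 1))
    (hγstep : ∀ k, lam * γ k ≤ 1)
    (hγ0 : Tendsto γ atTop (nhds 0))
    (hdiv : Tendsto (fun K : ℕ => ∑ k ∈ Finset.range K, γ k) atTop atTop)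
    (hA : ∀ K : ℕ, 1 ≤ K →
      ∑ k ∈ Finset.range K, γ k * ∏ l ∈ Finset.Ico (k + 1) K, (1 - lam * γ l) ≤ M)
    (ε : ℕ → ℝ) (hεnn : ∀ k, 0 ≤ ε k) (hεanti : Antitone ε)
    (hε0 : Tendsto ε atTop (nhds 0))
    (W : ℕ → ℝ) (hW : ∀ k, 0 ≤ W k)
    (hrec : ∀ k, W (k + 1) ≤ (1 - lam * γ k) * W k + (γ k) ^ 2 * C + 2 * γ k * ε k) :
    Tendsto W atTop (nhds 0) := by
  set P : ℕ → ℕ → ℝ := fun n K => ∏ l ∈ Finset.Ico n K, (1 - lam * γ l) with hPdef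
  have hfac0 : ∀ l, 0 ≤ 1 - lam * γ l := fun l => by linarith [hγstep l]
  have hfac1 : ∀ l, 1 - lam * γ l ≤ 1 := fun l => by nlinarith [hγpos l, hlam]
  have hPnn : ∀ n K, 0 ≤ P n K := fun n K => Finset.prod_nonneg (fun l _ => hfac0 l)
  have hPle1 : ∀ n K, P n K ≤ 1 :=
    fun n K => Finset.prod_le_one (fun l _ => hfac0 l) (fun l _ => hfac1 l)
  -- unrolled recursion
  have hunroll : ∀ n K, n ≤ K → W K ≤ P n K * W n +
      ∑ k ∈ Finset.Ico n K, (γ k ^ 2 * C + 2 * γ k * ε k) * P (k + 1) K := by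
    intro n K hnK
    induction K, hnK using Nat.le_induction with
    | base => simp [hPdef]
    | succ K hnK ih =>
      have h1 := hrec K
      have h2 : (1 - lam * γ K) * W K ≤ (1 - lam * γ K) *
          (P n K * W n + ∑ k ∈ Finset.Ico n K, (γ k ^ 2 * C + 2 * γ k * ε k) * P (k + 1) K) :=
        mul_le_mul_of_nonneg_left ih (hfac0 K)
      have hPs : P n (K + 1) = P n K * (1 - lam * γ K) :=
        Finset.prod_Ico_succ_top hnK _
      have hsum : ∑ k ∈ Finset.Ico n (K + 1), (γ k ^ 2 * C + 2 * γ k * ε k) * P (k + 1) (K + 1)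
          = (∑ k ∈ Finset.Ico n K, (γ k ^ 2 * C + 2 * γ k * ε k) * P (k + 1) K) * (1 - lam * γ K)
            + (γ K ^ 2 * C + 2 * γ K * ε K) := by
        rw [Finset.sum_Ico_succ_top hnK]
        have hPKK : P (K + 1) (K + 1) = 1 := by simp [hPdef]
        rw [hPKK, mul_one, Finset.sum_mul]
        congr 1
        apply Finset.sum_congr rfl
        intro k hk
        have hkK : k + 1 ≤ K := (Finset.mem_Ico.mp hk).2
        have : P (k + 1) (K + 1) = P (k + 1) K * (1 - lam * γ K) :=
          Finset.prod_Ico_succ_top hkK _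
        rw [this]; ring
      rw [hPs, hsum]
      nlinarith [h1, h2]
  -- product tends to zero
  have hPtend : ∀ n, Tendsto (fun K => P n K) atTop (nhds 0) := by
    intro n
    have hub : ∀ K, P n K ≤ Real.exp (-(lam * ∑ l ∈ Finset.Ico n K, γ l)) := by
      intro K
      calc P n K ≤ ∏ l ∈ Finset.Ico n K, Real.exp (-(lam * γ l)) := by
            apply Finset.prod_le_prod (fun l _ => hfac0 l)
            intro l _
            have := Real.add_one_le_exp (-(lam * γ l))
            linarith
        _ = Real.exp (∑ l ∈ Finset.Ico n K, -(lam * γ l)) := (Real.exp_sum _ _).symm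
        _ = Real.exp (-(lam * ∑ l ∈ Finset.Ico n K, γ l)) := by
            rw [Finset.mul_sum]; rw [← Finset.sum_neg_distrib]
    have hsumdiv : Tendsto (fun K => ∑ l ∈ Finset.Ico n K, γ l) atTop atTop := by
      have heq : ∀ K, n ≤ K → ∑ l ∈ Finset.Ico n K, γ l
          = (∑ l ∈ Finset.range K, γ l) - (∑ l ∈ Finset.range n, γ l) := by
        intro K hK
        exact Finset.sum_Ico_eq_sub _ hK
      have h1 : Tendsto (fun K => (∑ l ∈ Finset.range K, γ l) - (∑ l ∈ Finset.range n, γ l))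
          atTop atTop := tendsto_atTop_add_const_right _ _ hdiv
      refine h1.congr' ?_
      filter_upwards [eventually_ge_atTop n] with K hK
      exact (heq K hK).symm
    have hexp : Tendsto (fun K => Real.exp (-(lam * ∑ l ∈ Finset.Ico n K, γ l))) atTop (nhds 0) := by
      apply Real.tendsto_exp_atBot.comp
      apply tendsto_neg_atBot_iff.mpr
      exact hsumdiv.const_mul_atTop hlam
    exact squeeze_zero (fun K => hPnn n K) hub hexp
  -- M is positive
  have hM : 0 < M := by
    have := hA 1 le_rfl
    simp [hPdef] at this
    have := hγpos 0
    linarith [hγpos 0, hA 1 le_rfl]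
  -- main convergence
  rw [Metric.tendsto_atTop]
  intro e he
  set δ : ℝ := e / (2 * (C + 2) * M) with hδdef
  have hδpos : 0 < δ := by
    apply div_pos he
    positivity
  obtain ⟨N1, hN1⟩ := (Metric.tendsto_atTop.mp hγ0) δ hδpos
  obtain ⟨N2, hN2⟩ := (Metric.tendsto_atTop.mp hε0) δ hδpos
  set N : ℕ := max (max N1 N2) 1 with hNdef
  have hγsmall : ∀ k, N ≤ k → γ k ≤ δ := by
    intro k hk
    have := hN1 k (le_trans (le_trans (le_max_left N1 N2) (le_max_left _ 1)) hk)
    rw [Real.dist_eq, abs_sub_lt_iff] at this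
    linarith [this.1]
  have hεsmall : ∀ k, N ≤ k → ε k ≤ δ := by
    intro k hk
    have := hN2 k (le_trans (le_trans (le_max_right N1 N2) (le_max_left _ 1)) hk)
    rw [Real.dist_eq, abs_sub_lt_iff] at this
    linarith [this.1]
  -- tail bound for K ≥ N
  have htail : ∀ K, N ≤ K →
      ∑ k ∈ Finset.Ico N K, (γ k ^ 2 * C + 2 * γ k * ε k) * P (k + 1) K ≤ e / 2 := by
    intro K hK
    have hK1 : 1 ≤ K := le_trans (le_max_right _ 1) hK
    have step1 : ∑ k ∈ Finset.Ico N K, (γ k ^ 2 * C + 2 * γ k * ε k) * P (k + 1) K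
        ≤ ∑ k ∈ Finset.Ico N K, ((C + 2) * δ) * (γ k * P (k + 1) K) := by
      apply Finset.sum_le_sum
      intro k hk
      have hkN : N ≤ k := (Finset.mem_Ico.mp hk).1
      have hγk := hγsmall k hkN
      have hεk := hεsmall k hkN
      have hγp := (hγpos k).le
      have hεp := hεnn k
      have hPn := hPnn (k + 1) K
      have ht : γ k ^ 2 * C + 2 * γ k * ε k ≤ (C + 2) * δ * γ k := by
        nlinarith [mul_le_mul_of_nonneg_right hγk hγp, mul_le_mul_of_nonneg_left hεk hγp]
      calc (γ k ^ 2 * C + 2 * γ k * ε k) * P (k + 1) K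
          ≤ ((C + 2) * δ * γ k) * P (k + 1) K := mul_le_mul_of_nonneg_right ht hPn
        _ = ((C + 2) * δ) * (γ k * P (k + 1) K) := by ring
    have step2 : ∑ k ∈ Finset.Ico N K, γ k * P (k + 1) K ≤ M := by
      have hsubset : Finset.Ico N K ⊆ Finset.range K := by
        rw [Finset.range_eq_Ico]
        exact Finset.Ico_subset_Ico (Nat.zero_le N) le_rfl
      calc ∑ k ∈ Finset.Ico N K, γ k * P (k + 1) K
          ≤ ∑ k ∈ Finset.range K, γ k * P (k + 1) K := by
            apply Finset.sum_le_sum_of_subset_of_nonneg hsubset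
            intro k _ _
            exact mul_nonneg (hγpos k).le (hPnn (k + 1) K)
        _ ≤ M := hA K hK1
    calc ∑ k ∈ Finset.Ico N K, (γ k ^ 2 * C + 2 * γ k * ε k) * P (k + 1) K
        ≤ ((C + 2) * δ) * ∑ k ∈ Finset.Ico N K, γ k * P (k + 1) K := by
          rw [← Finset.mul_sum] at step1; exact step1
      _ ≤ ((C + 2) * δ) * M := by
          apply mul_le_mul_of_nonneg_left step2
          positivity
      _ = e / 2 := by
          rw [hδdef]; field_simp
  -- head term tends to zero
  have hhead : Tendsto (fun K => P N K * W N) atTop (nhds 0) := by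
    have := (hPtend N).mul_const (W N)
    simpa using this
  obtain ⟨N3, hN3⟩ := (Metric.tendsto_atTop.mp hhead) (e / 2) (by linarith)
  refine ⟨max N N3, fun K hK => ?_⟩
  have hKN : N ≤ K := le_trans (le_max_left _ _) hK
  have hKN3 : N3 ≤ K := le_trans (le_max_right _ _) hK
  have h1 := hunroll N K hKN
  have h2 := htail K hKN
  have h3 := hN3 K hKN3
  rw [Real.dist_eq, abs_sub_lt_iff] at h3 ⊢
  constructor
  · have : P N K * W N < e / 2 := by linarith [h3.1]
    linarith
  · linarith [hW K, he]
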